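/- arXiv:2301.05000 — 3 statements merged into one kernel-verified Lean document; each statement's English description precedes it below -/
import Mathlib

section
/- Suppose a group G acts on a set X. Let g, h ∈ G, let x_0, x_1, …, x_t ∈ X, and let r, s ≥ 0 be integers with gcd(r,s) = 1 and r + s ≤ t such that g·x_i = x_{i+r} for all 0 ≤ i ≤ t − r and h·x_i = x_{i+s} for all 0 ≤ i ≤ t − s. Let H be the stabilizer of x_0 in G and assume H is malnormal in G. Then either g, h ∈ H (and hence x_0 = x_1 = ⋯ = x_t), or there exists d ∈ G such that g = d^r and h = d^s. -/
/-- A subgroup `H` of `G` is malnormal if `x H x⁻¹ ∩ H = {1}` for every `x ∉ H`. -/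
def Subgroup.Malnormal {G : Type*} [Group G] (H : Subgroup G) : Prop :=
  ∀ x : G, x ∉ H → ∀ g : G, g ∈ H → x * g * x⁻¹ ∈ H → g = 1

private lemma aux {G : Type*} [Group G] {X : Type*} [MulAction G X] (x : ℕ → X)
    (hmal : (MulAction.stabilizer G (x 0)).Malnormal) :
    ∀ n : ℕ, ∀ g h : G, ∀ t r s : ℕ, r + s = n → Nat.gcd r s = 1 → r + s ≤ t →
    (∀ i, i ≤ t - r → g • x i = x (i + r)) →
    (∀ i, i ≤ t - s → h • x i = x (i + s)) →
    (g ∈ MulAction.stabilizer G (x 0) ∧ h ∈ MulAction.stabilizer G (x 0) ∧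
        ∀ i, i ≤ t → x i = x 0) ∨
      ∃ d : G, g = d ^ r ∧ h = d ^ s := by
  intro n
  induction n using Nat.strong_induction_on with
  | _ n ih =>
  intro g h t r s hn hgcd hrst hg hh
  rcases Nat.eq_zero_or_pos r with hr0 | hrpos
  · subst hr0
    have hs1 : s = 1 := by simpa using hgcd
    subst hs1
    have ht : 1 ≤ t := by omega
    have hgH : g ∈ MulAction.stabilizer G (x 0) := by
      rw [MulAction.mem_stabilizer_iff]
      simpa using hg 0 (by omega)
    by_cases hhH : h ∈ MulAction.stabilizer G (x 0)
    · left
      refine ⟨hgH, hhH, ?_⟩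
      intro i hi
      induction i with
      | zero => rfl
      | succ j ihh =>
        have hxj : x j = x 0 := ihh (by omega)
        have h1 : h • x j = x (j + 1) := hh j (by omega)
        rw [hxj] at h1
        rw [← h1]
        exact hhH
    · right
      refine ⟨h, ?_, (pow_one h).symm⟩
      have hinv : h⁻¹ ∉ MulAction.stabilizer G (x 0) := fun hc => hhH (by simpa using inv_mem hc)
      have hg1 : g • x 1 = x 1 := by simpa using hg 1 (by omega)
      have hhx : h • x 0 = x 1 := by simpa using hh 0 (by omega)
      have hconj : h⁻¹ * g * (h⁻¹)⁻¹ ∈ MulAction.stabilizer G (x 0) := by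
        rw [MulAction.mem_stabilizer_iff, inv_inv, mul_smul, mul_smul, hhx, hg1,
          inv_smul_eq_iff]
        exact hhx.symm
      have hg1' := hmal h⁻¹ hinv g hgH hconj
      simp [hg1']
  rcases Nat.eq_zero_or_pos s with hs0 | hspos
  · subst hs0
    have hr1 : r = 1 := by simpa using hgcd
    subst hr1
    have ht : 1 ≤ t := by omega
    have hhH : h ∈ MulAction.stabilizer G (x 0) := by
      rw [MulAction.mem_stabilizer_iff]
      simpa using hh 0 (by omega)
    by_cases hgH : g ∈ MulAction.stabilizer G (x 0)
    · left
      refine ⟨hgH, hhH, ?_⟩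
      intro i hi
      induction i with
      | zero => rfl
      | succ j ihh =>
        have hxj : x j = x 0 := ihh (by omega)
        have h1 : g • x j = x (j + 1) := hg j (by omega)
        rw [hxj] at h1
        rw [← h1]
        exact hgH
    · right
      refine ⟨g, (pow_one g).symm, ?_⟩
      have hinv : g⁻¹ ∉ MulAction.stabilizer G (x 0) := fun hc => hgH (by simpa using inv_mem hc)
      have hh1 : h • x 1 = x 1 := by simpa using hh 1 (by omega)
      have hgx : g • x 0 = x 1 := by simpa using hg 0 (by omega)
      have hconj : g⁻¹ * h * (g⁻¹)⁻¹ ∈ MulAction.stabilizer G (x 0) := by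
        rw [MulAction.mem_stabilizer_iff, inv_inv, mul_smul, mul_smul, hgx, hh1,
          inv_smul_eq_iff]
        exact hgx.symm
      have hh1' := hmal g⁻¹ hinv h hhH hconj
      simp [hh1']
  rcases le_or_gt r s with hle | hlt
  · -- reduce to (r, s - r) on t - r
    have hgcd' : Nat.gcd r (s - r) = 1 := by
      rw [Nat.gcd_sub_self_right hle]; exact hgcd
    have hg' : ∀ i, i ≤ (t - r) - r → g • x i = x (i + r) := fun i hi => hg i (by omega)
    have hh' : ∀ i, i ≤ (t - r) - (s - r) → (g⁻¹ * h) • x i = x (i + (s - r)) := by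
      intro i hi
      have h1 : h • x i = x (i + s) := hh i (by omega)
      have h2 : g • x (i + (s - r)) = x (i + (s - r) + r) := hg _ (by omega)
      have h3 : i + (s - r) + r = i + s := by omega
      rw [mul_smul, h1, ← h3, ← h2, inv_smul_smul]
    rcases ih s (by omega) g (g⁻¹ * h) (t - r) r (s - r) (by omega) hgcd' (by omega) hg' hh'
      with ⟨hgH, hghH, hall⟩ | ⟨d, hd1, hd2⟩
    · left
      have hhH : h ∈ MulAction.stabilizer G (x 0) := by
        have : h = g * (g⁻¹ * h) := by group
        rw [this]; exact mul_mem hgH hghH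
      refine ⟨hgH, hhH, ?_⟩
      intro i hi
      rcases le_or_gt i (t - r) with hile | hgt
      · exact hall i hile
      · have hir : r ≤ i := by omega
        have h1 : g • x (i - r) = x (i - r + r) := hg _ (by omega)
        have h2 : x (i - r) = x 0 := hall _ (by omega)
        have h3 : i - r + r = i := by omega
        rw [h2, h3] at h1
        rw [← h1]
        exact hgH
    · right
      refine ⟨d, hd1, ?_⟩
      have : h = g * (g⁻¹ * h) := by group
      rw [this, hd2, hd1, ← pow_add]
      congr 1
      omega
  · -- reduce to (r - s, s) on t - s
    have hgcd' : Nat.gcd (r - s) s = 1 := by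
      rw [Nat.gcd_sub_self_left hlt.le]; exact hgcd
    have hh' : ∀ i, i ≤ (t - s) - s → h • x i = x (i + s) := fun i hi => hh i (by omega)
    have hg' : ∀ i, i ≤ (t - s) - (r - s) → (h⁻¹ * g) • x i = x (i + (r - s)) := by
      intro i hi
      have h1 : g • x i = x (i + r) := hg i (by omega)
      have h2 : h • x (i + (r - s)) = x (i + (r - s) + s) := hh _ (by omega)
      have h3 : i + (r - s) + s = i + r := by omega
      rw [mul_smul, h1, ← h3, ← h2, inv_smul_smul]
    rcases ih r (by omega) (h⁻¹ * g) h (t - s) (r - s) s (by omega) hgcd' (by omega) hg' hh'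
      with ⟨hhgH, hhH, hall⟩ | ⟨d, hd1, hd2⟩
    · left
      have hgH : g ∈ MulAction.stabilizer G (x 0) := by
        have : g = h * (h⁻¹ * g) := by group
        rw [this]; exact mul_mem hhH hhgH
      refine ⟨hgH, hhH, ?_⟩
      intro i hi
      rcases le_or_gt i (t - s) with hile | hgt
      · exact hall i hile
      · have h1 : h • x (i - s) = x (i - s + s) := hh _ (by omega)
        have h2 : x (i - s) = x 0 := hall _ (by omega)
        have h3 : i - s + s = i := by omega
        rw [h2, h3] at h1
        rw [← h1]
        exact hhH
    · right
      refine ⟨d, ?_, hd2⟩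
      have : g = h * (h⁻¹ * g) := by group
      rw [this, hd1, hd2, ← pow_add]
      congr 1
      omega

/-- Suppose a group `G` acts on a set `X`, `g, h ∈ G`, `x_0, …, x_t ∈ X`, `gcd(r,s) = 1`,
`r + s ≤ t`, `g • x_i = x_{i+r}` for `0 ≤ i ≤ t - r` and `h • x_i = x_{i+s}` for
`0 ≤ i ≤ t - s`.  If the stabilizer `H` of `x_0` is malnormal in `G`, then either
`g, h ∈ H` (and hence `x_0 = x_1 = ⋯ = x_t`), or there is `d ∈ G` with `g = d^r`, `h = d^s`. -/
theorem overlapping_by_action {G : Type*} [Group G] {X : Type*} [MulAction G X]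
    (g h : G) (t r s : ℕ) (x : ℕ → X)
    (hgcd : Nat.gcd r s = 1) (hrst : r + s ≤ t)
    (hg : ∀ i, i ≤ t - r → g • x i = x (i + r))
    (hh : ∀ i, i ≤ t - s → h • x i = x (i + s))
    (hmal : (MulAction.stabilizer G (x 0)).Malnormal) :
    (g ∈ MulAction.stabilizer G (x 0) ∧ h ∈ MulAction.stabilizer G (x 0) ∧
        ∀ i, i ≤ t → x i = x 0) ∨
      ∃ d : G, g = d ^ r ∧ h = d ^ s := by
  exact aux x hmal (r + s) g h t r s rfl hgcd hrst hg hh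
end

section
/- Let G be a group and let g ∈ G be an element of infinite order whose centralizer C_G(g) is a cyclic subgroup. If g is conjugate to g⁻¹ in G, then g is the product of two involutions, i.e. there exist u, v ∈ G with u² = v² = 1 and g = u·v. -/
/-- If `g` is an element of infinite order of a group `G` whose centralizer is cyclic, and
`g` is conjugate to `g⁻¹`, then `g` is the product of two involutions. -/
theorem conjugate_to_inverse_is_product_of_involutions {G : Type*} [Group G] (g : G)
    (hinf : ∀ k : ℤ, k ≠ 0 → g ^ k ≠ 1)
    (hcyc : IsCyclic (Subgroup.centralizer {g} : Subgroup G))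
    (hconj : ∃ x : G, x⁻¹ * g * x = g⁻¹) :
    ∃ u v : G, u ^ 2 = 1 ∧ v ^ 2 = 1 ∧ g = u * v := by
  obtain ⟨x, hx⟩ := hconj
  have hconjpow : ∀ (a : G) (t : ℤ), (x⁻¹ * a * x) ^ t = x⁻¹ * a ^ t * x := by
    intro a t
    simpa using conj_zpow (i := t) (a := x⁻¹) (b := a)
  have hx' : x⁻¹ * g⁻¹ * x = g := by
    have h : (x⁻¹ * g * x)⁻¹ = g⁻¹⁻¹ := congrArg (·⁻¹) hx
    simpa [mul_assoc] using h
  have hgx : g * x = x * g⁻¹ := by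
    have := congrArg (fun t => x * t) hx
    simpa [mul_assoc] using this
  have hgix : g⁻¹ * x = x * g := by
    have := congrArg (fun t => x * t) hx'
    simpa [mul_assoc] using this
  have hgC : g ∈ Subgroup.centralizer {g} :=
    Subgroup.mem_centralizer_singleton_iff.mpr rfl
  obtain ⟨c, hc⟩ := hcyc.exists_generator
  have hcg : (c : G) * g = g * (c : G) :=
    Subgroup.mem_centralizer_singleton_iff.mp c.2
  obtain ⟨n, hn⟩ := hc ⟨g, hgC⟩
  have hn' : (c : G) ^ n = g := by
    have := congrArg Subtype.val hn
    simpa using this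
  -- injectivity of integer powers of c
  have hcinj : ∀ a b : ℤ, (c : G) ^ a = (c : G) ^ b → a = b := by
    intro a b hab
    by_contra hne
    have h1 : (c : G) ^ (a - b) = 1 := by
      rw [zpow_sub, hab]; simp
    have h2 : g ^ (a - b) = 1 := by
      rw [← hn', ← zpow_mul, mul_comm, zpow_mul, h1, one_zpow]
    exact hinf (a - b) (sub_ne_zero.mpr hne) h2
  have hn0 : n ≠ 0 := by
    intro h
    apply hinf 1 one_ne_zero
    rw [h] at hn'
    simpa using hn'.symm
  -- x⁻¹ c x lies in the centralizer
  have hxcx : x⁻¹ * (c : G) * x ∈ Subgroup.centralizer {g} := by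
    rw [Subgroup.mem_centralizer_singleton_iff]
    have hgxinv : g * x⁻¹ = x⁻¹ * g⁻¹ := by
      have := congrArg (fun t => t * x⁻¹) hx'
      simpa [mul_assoc] using this.symm
    have hcgi : g⁻¹ * (c : G) = (c : G) * g⁻¹ := by
      have := congrArg (fun t => g⁻¹ * t * g⁻¹) hcg
      simpa [mul_assoc] using this
    calc x⁻¹ * ↑c * x * g = x⁻¹ * ↑c * (x * g) := by group
      _ = x⁻¹ * (↑c * g⁻¹) * x := by rw [← hgix]; group
      _ = x⁻¹ * g⁻¹ * (↑c * x) := by rw [← hcgi]; group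
      _ = g * (x⁻¹ * ↑c * x) := by rw [← hgxinv]; group
  obtain ⟨k, hk⟩ := hc ⟨_, hxcx⟩
  have hk' : (c : G) ^ k = x⁻¹ * (c : G) * x := by
    have := congrArg Subtype.val hk
    simpa using this
  -- conjugation by x inverts c
  have hkn : k = -1 := by
    have h2 : (c : G) ^ (k * n) = (c : G) ^ (-n) := by
      rw [zpow_mul, hk', hconjpow, hn', hx, zpow_neg, hn']
    have h3 : k * n = -n := hcinj _ _ h2
    have h4 : (k + 1) * n = 0 := by linear_combination h3
    rcases mul_eq_zero.mp h4 with h | h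
    · linarith
    · exact absurd h hn0
  -- x ^ 2 lies in the centralizer
  have hx2C : x ^ 2 ∈ Subgroup.centralizer {g} := by
    rw [Subgroup.mem_centralizer_singleton_iff]
    calc x ^ 2 * g = x * (x * g) := by rw [pow_two]; group
      _ = x * (g⁻¹ * x) := by rw [hgix]
      _ = (g * x) * x := by rw [hgx]; group
      _ = g * x ^ 2 := by rw [pow_two]; group
  obtain ⟨m, hm⟩ := hc ⟨_, hx2C⟩
  have hm' : (c : G) ^ m = x ^ 2 := by
    have := congrArg Subtype.val hm
    simpa using this
  -- x ^ 2 = 1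
  have hxx : x ^ 2 = 1 := by
    have hfix : x⁻¹ * x ^ 2 * x = x ^ 2 := by group
    have h2 : (c : G) ^ m = (c : G) ^ (-m) := by
      calc (c : G) ^ m = x⁻¹ * (c : G) ^ m * x := by rw [hm', hfix]
        _ = (x⁻¹ * (c : G) * x) ^ m := (hconjpow _ _).symm
        _ = ((c : G) ^ k) ^ m := by rw [hk']
        _ = (c : G) ^ (-m) := by rw [hkn, ← zpow_mul]; ring_nf
    have hm0 : m = 0 := by have := hcinj _ _ h2; omega
    rw [← hm', hm0, zpow_zero]
  have hxinv : x⁻¹ = x := inv_eq_of_mul_eq_one_right (by rw [← pow_two]; exact hxx)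
  refine ⟨x, x⁻¹ * g, hxx, ?_, by group⟩
  calc (x⁻¹ * g) ^ 2 = x⁻¹ * g * x⁻¹ * g := by rw [pow_two]; group
    _ = (x⁻¹ * g * x) * g := by rw [hxinv]
    _ = g⁻¹ * g := by rw [hx]
    _ = 1 := by group
end

section
/- Let G be a group and let g_0 ∈ G be an element of infinite order that is not a proper power, and suppose that every h ∈ G satisfying h⁻¹ g_0^k h = g_0^l for some integers k, l > 0 belongs to the cyclic subgroup ⟨g_0⟩. If g_0^t = g_1^s for some integers t, s ≥ 1 and some g_1 ∈ G that is not a proper power, then g_1 = g_0 (and t = s); in particular, g = g_0^t has a unique non-power root. -/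
/-- An element of a group is a proper power if it equals `x ^ k` for some element `x` and
some integer `k ≥ 2`. -/
def IsProperPower {G : Type*} [Group G] (g : G) : Prop :=
  ∃ x : G, ∃ k : ℕ, 2 ≤ k ∧ x ^ k = g

/-- Let `g₀` be a non-power element of infinite order such that every `h` conjugating some
positive power of `g₀` to a positive power of `g₀` lies in `⟨g₀⟩`.  If `g₀ ^ t = g₁ ^ s` with
`t, s ≥ 1` and `g₁` a non-power, then `g₁ = g₀` and `t = s`; in particular `g₀ ^ t` has a
unique non-power root. -/
theorem unique_nonpower_root {G : Type*} [Group G] (g₀ : G)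
    (hinf : ∀ k : ℤ, k ≠ 0 → g₀ ^ k ≠ 1)
    (hnp : ¬ IsProperPower g₀)
    (hconj : ∀ h : G, (∃ k l : ℤ, 0 < k ∧ 0 < l ∧ h⁻¹ * g₀ ^ k * h = g₀ ^ l) →
      h ∈ Subgroup.zpowers g₀)
    (t s : ℤ) (ht : 1 ≤ t) (hs : 1 ≤ s) (g₁ : G)
    (hg₁ : ¬ IsProperPower g₁) (heq : g₀ ^ t = g₁ ^ s) :
    g₁ = g₀ ∧ t = s := by
  have hmem : g₁ ∈ Subgroup.zpowers g₀ := by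
    apply hconj
    refine ⟨t, t, by omega, by omega, ?_⟩
    rw [heq]
    group
  obtain ⟨m, hm⟩ := Subgroup.mem_zpowers_iff.mp hmem
  have hts : t = m * s := by
    have h1 : g₀ ^ t = g₀ ^ (m * s) := by
      rw [zpow_mul, hm, heq]
    by_contra hne
    exact hinf (t - (m * s)) (by omega) (by rw [zpow_sub, h1, mul_inv_cancel])
  have hm1 : 1 ≤ m := by nlinarith
  have : m = 1 := by
    by_contra hne
    apply hg₁
    refine ⟨g₀, m.toNat, by omega, ?_⟩
    rw [← zpow_natCast, Int.toNat_of_nonneg (by omega), hm]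
  subst this
  simp at hm
  exact ⟨hm.symm, by omega⟩
end
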